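/- arXiv:2411.14983 — 4 statements merged into one kernel-verified Lean document; each statement's English description precedes it below -/
import Mathlib

section
/- Let n, m be natural numbers with 1 ≤ m ≤ n, let a_1, …, a_n be real numbers, and for v ∈ {−1, +1} define λ(v) = (n / C(n,m)) · Σ_{S ⊆ {1,…,n}, |S| = m} ( v · m^{-1} Σ_{j ∈ S} a_j )_+ , where C(n,m) is the binomial coefficient and (t)_+ = max(t, 0). Then λ(v) − λ(−v) = v · Σ_{j=1}^{n} a_j. (This is the exactness identity showing that sub-sampling switching rates built from any additive decomposition of the potential gradient satisfy the skew-detailed-balance condition λ_i(x,v) − λ_i(x,F_i(v)) = v_i ∇_i U_n(x).) -/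
open Finset

lemma count_mem_powersetCard {α : Type*} [DecidableEq α] (s : Finset α) (m : ℕ)
    (hm : 1 ≤ m) {j : α} (hj : j ∈ s) :
    ((powersetCard m s).filter (fun S => j ∈ S)).card
      = (s.card - 1).choose (m - 1) := by
  have : ((powersetCard m s).filter (fun S => j ∈ S)).card
      = (powersetCard (m - 1) (s.erase j)).card := by
    apply Finset.card_bij (fun S _ => S.erase j)
    · intro S hS
      simp only [mem_filter, mem_powersetCard] at hS
      rw [mem_powersetCard]
      refine ⟨fun x hx => ?_, ?_⟩
      · rw [mem_erase] at hx ⊢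
        exact ⟨hx.1, hS.1.1 hx.2⟩
      · rw [card_erase_of_mem hS.2, hS.1.2]
    · intro S hS T hT h
      simp only [mem_filter] at hS hT
      rw [← insert_erase hS.2, ← insert_erase hT.2, h]
    · intro S hS
      rw [mem_powersetCard] at hS
      refine ⟨insert j S, ?_, ?_⟩
      · simp only [mem_filter, mem_powersetCard]
        have hjS : j ∉ S := fun h => (mem_erase.1 (hS.1 h)).1 rfl
        refine ⟨⟨?_, ?_⟩, mem_insert_self j S⟩
        · intro x hx
          rcases mem_insert.1 hx with rfl | hx
          · exact hj
          · exact (erase_subset _ _) (hS.1 hx)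
        · rw [card_insert_of_notMem hjS, hS.2]
          omega
      · rw [erase_insert (fun h => (mem_erase.1 (hS.1 h)).1 rfl)]
  rw [this, card_powersetCard, card_erase_of_mem hj]

lemma sum_powersetCard_sum (n m : ℕ) (hm : 1 ≤ m) (f : ℕ → ℝ) :
    ∑ S ∈ powersetCard m (range n), ∑ j ∈ S, f j
      = ((n - 1).choose (m - 1) : ℝ) * ∑ j ∈ range n, f j := by
  have : ∀ S ∈ powersetCard m (range n),
      ∑ j ∈ S, f j = ∑ j ∈ range n, if j ∈ S then f j else 0 := by
    intro S hS
    rw [mem_powersetCard] at hS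
    rw [sum_ite_mem, inter_eq_right.2 hS.1]
  rw [sum_congr rfl this, Finset.sum_comm]
  rw [Finset.mul_sum]
  apply sum_congr rfl
  intro j hj
  rw [← Finset.sum_filter, sum_const, count_mem_powersetCard _ m hm hj, card_range]
  simp [nsmul_eq_mul]

/-- The Zig-Zag sub-sampling switching rate with batch size `m` built from the
reals `a 0, …, a (n-1)` and direction `v ∈ {−1, +1}`:
`λ(v) = (n / C(n,m)) Σ_{S ⊆ {0,…,n-1}, |S| = m} ( v · m⁻¹ Σ_{j ∈ S} a j )₊`. -/
noncomputable def subsamplingRate (n m : ℕ) (a : ℕ → ℝ) (v : ℝ) : ℝ :=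
  (n : ℝ) / (n.choose m : ℝ) *
    ∑ S ∈ Finset.powersetCard m (Finset.range n),
      max (v * ((m : ℝ)⁻¹ * ∑ j ∈ S, a j)) 0

/-- Exactness identity: `λ(v) − λ(−v) = v · Σ_j a_j`. -/
theorem subsamplingRate_sub_eq (n m : ℕ) (hm : 1 ≤ m) (hmn : m ≤ n)
    (a : ℕ → ℝ) (v : ℝ) (hv : v = 1 ∨ v = -1) :
    subsamplingRate n m a v - subsamplingRate n m a (-v)
      = v * ∑ j ∈ Finset.range n, a j := by
  unfold subsamplingRate
  rw [← mul_sub, ← Finset.sum_sub_distrib]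
  have key : ∀ S : Finset ℕ,
      max (v * ((m : ℝ)⁻¹ * ∑ j ∈ S, a j)) 0
        - max (-v * ((m : ℝ)⁻¹ * ∑ j ∈ S, a j)) 0
      = v * ((m : ℝ)⁻¹ * ∑ j ∈ S, a j) := by
    intro S
    set x := v * ((m:ℝ)⁻¹ * ∑ j ∈ S, a j) with hx
    rw [show -v * ((m:ℝ)⁻¹ * ∑ j ∈ S, a j) = -x by rw [hx]; ring]
    rcases le_total 0 x with h1 | h1
    · rw [max_eq_left h1, max_eq_right (neg_nonpos.2 h1)]; ring
    · rw [max_eq_right h1, max_eq_left (neg_nonneg.2 h1)]; ring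
  simp_rw [key]
  rw [← Finset.mul_sum, ← Finset.mul_sum, sum_powersetCard_sum n m hm a]
  have hn : 1 ≤ n := le_trans hm hmn
  have hchooseN : m * n.choose m = n * (n-1).choose (m-1) := by
    obtain ⟨n', rfl⟩ : ∃ n', n = n' + 1 := ⟨n - 1, by omega⟩
    obtain ⟨m', rfl⟩ : ∃ m', m = m' + 1 := ⟨m - 1, by omega⟩
    simpa [mul_comm] using (Nat.add_one_mul_choose_eq n' m').symm
  have hchoose : (m : ℝ) * (n.choose m : ℝ) = (n : ℝ) * ((n-1).choose (m-1) : ℝ) := by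
    exact_mod_cast congrArg (Nat.cast : ℕ → ℝ) hchooseN
  have hc : (0:ℝ) < (n.choose m : ℝ) := by
    exact_mod_cast Nat.choose_pos hmn
  have hm' : (0:ℝ) < (m:ℝ) := by exact_mod_cast hm
  field_simp
  linear_combination (-v * ∑ j ∈ range n, a j) * hchoose
end

section
/- Let n ≥ 2 and 1 ≤ m ≤ n, let a_1, …, a_n be real numbers with mean ā = n^{-1} Σ_{j=1}^{n} a_j, and let v ∈ {−1, +1}. Then | (1 / C(n,m)) Σ_{S ⊆ {1,…,n}, |S| = m} ( v · m^{-1} Σ_{j ∈ S} a_j )_+ − ( v · ā )_+ | ≤ (1 / C(n,m)) Σ_{S, |S| = m} | m^{-1} Σ_{j ∈ S} a_j − ā | ≤ sqrt( ((n − m)/(n·m)) · (1/(n−1)) · Σ_{j=1}^{n} (a_j − ā)² ). In particular, the (normalized) sub-sampled switching rate differs from the canonical rate by at most the standard error of the SRSWOR mean estimator. -/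
open Finset

lemma count_subsets_containing {α : Type*} [DecidableEq α] (U T : Finset α) (hTU : T ⊆ U)
    (m : ℕ) (hTm : T.card ≤ m) :
    ((powersetCard m U).filter (fun S => T ⊆ S)).card
      = (U.card - T.card).choose (m - T.card) := by
  rw [← card_sdiff_of_subset hTU, ← card_powersetCard]
  apply card_bij (fun S _ => S \ T)
  · intro S hS
    simp only [mem_filter, mem_powersetCard] at hS
    obtain ⟨⟨hSU, hScard⟩, hTS⟩ := hS
    rw [mem_powersetCard]
    exact ⟨sdiff_subset_sdiff hSU Subset.rfl, by rw [card_sdiff_of_subset hTS, hScard]⟩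
  · intro S hS S' hS' h
    simp only [mem_filter, mem_powersetCard] at hS hS'
    have := congrArg (· ∪ T) h
    simpa [sdiff_union_of_subset hS.2, sdiff_union_of_subset hS'.2] using this
  · intro W hW
    rw [mem_powersetCard] at hW
    obtain ⟨hWU, hWcard⟩ := hW
    have hdisj : Disjoint W T := disjoint_of_subset_left hWU sdiff_disjoint
    refine ⟨W ∪ T, ?_, ?_⟩
    · simp only [mem_filter, mem_powersetCard]
      refine ⟨⟨union_subset (hWU.trans sdiff_subset) hTU, ?_⟩, subset_union_right⟩
      rw [card_union_of_disjoint hdisj, hWcard]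
      omega
    · rw [union_sdiff_right, sdiff_eq_self_of_disjoint hdisj]

lemma sum_sq_core (n m : ℕ) (hn : 2 ≤ n) (hm : 1 ≤ m) (hmn : m ≤ n) (b : ℕ → ℝ)
    (hb : ∑ j ∈ Finset.range n, b j = 0) :
    ∑ S ∈ powersetCard m (Finset.range n), (∑ j ∈ S, b j)^2
      = ((n-2).choose (m-1) : ℝ) * ∑ j ∈ Finset.range n, (b j)^2 := by
  set P := powersetCard m (Finset.range n) with hP
  set C1 : ℝ := ((n-1).choose (m-1) : ℝ) with hC1
  set K : ℝ := if 2 ≤ m then (((n-2).choose (m-2) : ℕ) : ℝ) else 0 with hK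
  have hcnt : ∀ i ∈ Finset.range n, ∀ j ∈ Finset.range n,
      (((P.filter (fun S => i ∈ S ∧ j ∈ S)).card : ℕ) : ℝ) = if i = j then C1 else K := by
    intro i hi j hj
    by_cases hij : i = j
    · subst hij
      simp only [if_pos rfl, and_self]
      have : (P.filter (fun S => i ∈ S)) = (P.filter (fun S => {i} ⊆ S)) := by
        simp [singleton_subset_iff]
      rw [this, hP, count_subsets_containing _ _ (by simpa using hi) _ (by simpa using hm)]
      simp [hC1]
    · rw [if_neg hij]
      have hpred : (P.filter (fun S => i ∈ S ∧ j ∈ S)) = (P.filter (fun S => ({i, j} : Finset ℕ) ⊆ S)) := by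
        apply filter_congr
        intro S _
        simp [insert_subset_iff]
      rw [hpred]
      by_cases h2 : 2 ≤ m
      · rw [count_subsets_containing _ _ (by
            simp only [insert_subset_iff, singleton_subset_iff]
            exact ⟨hi, hj⟩) _
          (by rw [card_insert_of_notMem (by simpa using hij), card_singleton]; omega)]
        rw [card_insert_of_notMem (by simpa using hij), card_singleton]
        simp [hK, h2]
      · have hm1 : m = 1 := by omega
        have : (P.filter (fun S => ({i, j} : Finset ℕ) ⊆ S)) = ∅ := by
          rw [filter_eq_empty_iff]
          intro S hS hsub
          have h1 : S.card = m := (mem_powersetCard.1 hS).2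
          have h2' : ({i, j} : Finset ℕ).card ≤ S.card := card_le_card hsub
          rw [card_insert_of_notMem (by simpa using hij), card_singleton] at h2'
          omega
        rw [this]
        simp [hK, h2]
  calc ∑ S ∈ P, (∑ j ∈ S, b j)^2
      = ∑ S ∈ P, ∑ i ∈ Finset.range n, ∑ j ∈ Finset.range n,
          (if i ∈ S then b i else 0) * (if j ∈ S then b j else 0) := by
        apply sum_congr rfl
        intro S hS
        have hSsub : S ⊆ Finset.range n := (mem_powersetCard.1 hS).1
        have : ∑ j ∈ S, b j = ∑ j ∈ Finset.range n, (if j ∈ S then b j else 0) := by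
          rw [sum_ite_mem, inter_eq_right.2 hSsub]
        rw [this, sq, Finset.sum_mul_sum]
    _ = ∑ i ∈ Finset.range n, ∑ j ∈ Finset.range n,
          (((P.filter (fun S => i ∈ S ∧ j ∈ S)).card : ℕ) : ℝ) * (b i * b j) := by
        rw [Finset.sum_comm]
        apply sum_congr rfl; intro i _
        rw [Finset.sum_comm]
        apply sum_congr rfl; intro j _
        rw [show ∑ x ∈ P, (if i ∈ x then b i else 0) * (if j ∈ x then b j else 0)
            = ∑ x ∈ P.filter (fun S => i ∈ S ∧ j ∈ S), (b i * b j) from by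
          rw [Finset.sum_filter]
          apply sum_congr rfl
          intro x _
          by_cases h1 : i ∈ x <;> by_cases h2 : j ∈ x <;> simp [h1, h2]]
        rw [sum_const, nsmul_eq_mul]
    _ = ∑ i ∈ Finset.range n, ∑ j ∈ Finset.range n,
          (if i = j then C1 else K) * (b i * b j) := by
        apply sum_congr rfl; intro i hi
        apply sum_congr rfl; intro j hj
        rw [hcnt i hi j hj]
    _ = ((n-2).choose (m-1) : ℝ) * ∑ j ∈ Finset.range n, (b j)^2 := by
        have hsplit : ∀ i j : ℕ, (if i = j then C1 else K) * (b i * b j)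
            = K * (b i * b j) + (if i = j then (C1 - K) * (b i * b j) else 0) := by
          intro i j; split_ifs <;> ring
        simp only [hsplit, Finset.sum_add_distrib]
        have h1 : ∑ i ∈ Finset.range n, ∑ j ∈ Finset.range n, K * (b i * b j) = 0 := by
          simp only [← Finset.mul_sum, ← Finset.sum_mul]
          rw [hb]; ring
        have h2 : ∀ i ∈ Finset.range n,
            (∑ j ∈ Finset.range n, if i = j then (C1 - K) * (b i * b j) else 0)
              = (C1 - K) * (b i)^2 := by
          intro i hi
          rw [Finset.sum_ite_eq (Finset.range n) i (fun j => (C1 - K) * (b i * b j)), if_pos hi]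
          ring
        rw [h1, Finset.sum_congr rfl h2, ← Finset.mul_sum, zero_add]
        have hCK : C1 - K = ((n-2).choose (m-1) : ℝ) := by
          by_cases h2m : 2 ≤ m
          · obtain ⟨n', rfl⟩ : ∃ n', n = n' + 2 := ⟨n - 2, by omega⟩
            obtain ⟨m', rfl⟩ : ∃ m', m = m' + 2 := ⟨m - 2, by omega⟩
            simp only [hC1, hK, if_pos h2m]
            have := Nat.choose_succ_succ' (n' + 1 - 1) (m' + 1 - 1)
            simp only [show n' + 2 - 1 = n' + 1 from rfl, show m' + 2 - 1 = m' + 1 from rfl,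
              show n' + 2 - 2 = n' from rfl, show m' + 2 - 2 = m' from rfl]
            rw [Nat.choose_succ_succ' n' m']
            push_cast; ring
          · have hm1 : m = 1 := by omega
            subst hm1
            simp [hC1, hK, h2m]
        rw [hCK]

lemma choose_identity (n m : ℕ) (hn : 2 ≤ n) (hm : 1 ≤ m) (hmn : m ≤ n) :
    (n-2).choose (m-1) * (n * (n-1)) = n.choose m * (m * (n-m)) := by
  obtain ⟨n', rfl⟩ : ∃ n', n = n' + 2 := ⟨n - 2, by omega⟩
  obtain ⟨m', rfl⟩ : ∃ m', m = m' + 1 := ⟨m - 1, by omega⟩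
  have A : (n'+2) * (n'+1).choose m' = (n'+2).choose (m'+1) * (m'+1) := by
    have := Nat.add_one_mul_choose_eq (n'+1) m'
    simpa [Nat.succ_eq_add_one] using this
  have B : (n'+1) * n'.choose m' = (n'+1).choose (m'+1) * (m'+1) := by
    have := Nat.add_one_mul_choose_eq n' m'
    simpa [Nat.succ_eq_add_one] using this
  have C : (n'+1).choose (m'+1) * (m'+1) = (n'+1).choose m' * (n'+1-m') := by
    exact Nat.choose_succ_right_eq (n'+1) m'
  have hm'n : m' ≤ n' + 1 := by omega
  calc (n'+2-2).choose (m'+1-1) * ((n'+2) * (n'+2-1))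
      = (n'+2) * ((n'+1) * n'.choose m') := by
        simp only [show n'+2-2 = n' from rfl, show m'+1-1 = m' from rfl,
          show n'+2-1 = n'+1 from rfl]; ring
    _ = (n'+2) * ((n'+1).choose m' * (n'+1-m')) := by rw [B, C]
    _ = ((n'+2) * (n'+1).choose m') * (n'+1-m') := by ring
    _ = ((n'+2).choose (m'+1) * (m'+1)) * (n'+1-m') := by rw [A]
    _ = (n'+2).choose (m'+1) * ((m'+1) * (n'+2-(m'+1))) := by
        rw [show n'+2-(m'+1) = n'+1-m' by omega]; ring

/-- The normalized sub-sampled switching rate differs from the canonical rate by at most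
the mean absolute deviation of the SRSWOR mean estimator, which is in turn bounded by its
standard error:
`|(1/C(n,m)) Σ_{|S|=m} (v·m⁻¹Σ_{j∈S}a_j)₊ − (v·ā)₊| ≤ (1/C(n,m)) Σ_{|S|=m} |m⁻¹Σ_{j∈S}a_j − ā|
  ≤ sqrt( ((n−m)/(n·m)) · (1/(n−1)) · Σ_j (a_j − ā)² )`. -/
theorem subsampled_rate_close_to_canonical (n m : ℕ) (hn : 2 ≤ n) (hm : 1 ≤ m)
    (hmn : m ≤ n) (a : ℕ → ℝ) (v : ℝ) (hv : v = 1 ∨ v = -1) :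
    |(1 / (n.choose m : ℝ)) *
          (∑ S ∈ Finset.powersetCard m (Finset.range n),
            max (v * ((m : ℝ)⁻¹ * ∑ j ∈ S, a j)) 0)
        - max (v * ((n : ℝ)⁻¹ * ∑ j ∈ Finset.range n, a j)) 0|
      ≤ (1 / (n.choose m : ℝ)) *
          ∑ S ∈ Finset.powersetCard m (Finset.range n),
            |(m : ℝ)⁻¹ * ∑ j ∈ S, a j - (n : ℝ)⁻¹ * ∑ j ∈ Finset.range n, a j| ∧
    (1 / (n.choose m : ℝ)) *
        (∑ S ∈ Finset.powersetCard m (Finset.range n),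
          |(m : ℝ)⁻¹ * ∑ j ∈ S, a j - (n : ℝ)⁻¹ * ∑ j ∈ Finset.range n, a j|)
      ≤ Real.sqrt
          (((n : ℝ) - (m : ℝ)) / ((n : ℝ) * (m : ℝ)) * (1 / ((n : ℝ) - 1)) *
            ∑ j ∈ Finset.range n,
              (a j - (n : ℝ)⁻¹ * ∑ k ∈ Finset.range n, a k) ^ 2) := by
  set P := Finset.powersetCard m (Finset.range n) with hPdef
  set abar : ℝ := (n : ℝ)⁻¹ * ∑ j ∈ Finset.range n, a j with habar
  have hn0 : (n:ℝ) ≠ 0 := by positivity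
  have hm0 : (m:ℝ) ≠ 0 := by
    have : 0 < m := hm
    positivity
  have hCpos : (0:ℝ) < (n.choose m : ℝ) := by exact_mod_cast Nat.choose_pos hmn
  have hcardP : (P.card : ℝ) = (n.choose m : ℝ) := by
    rw [hPdef, card_powersetCard, card_range]
  -- Lipschitz bound for the positive part
  have habs : ∀ x y : ℝ, |max (v*x) 0 - max (v*y) 0| ≤ |x - y| := by
    intro x y
    calc |max (v*x) 0 - max (v*y) 0| ≤ |v*x - v*y| := abs_max_sub_max_le_abs _ _ _
      _ = |x - y| := by
          rw [← mul_sub, abs_mul]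
          rcases hv with h | h <;> simp [h]
  constructor
  · -- first inequality
    have hrw : (1 / (n.choose m : ℝ)) * (∑ S ∈ P, max (v * ((m : ℝ)⁻¹ * ∑ j ∈ S, a j)) 0)
        - max (v * abar) 0
        = (1 / (n.choose m : ℝ)) *
          (∑ S ∈ P, (max (v * ((m : ℝ)⁻¹ * ∑ j ∈ S, a j)) 0 - max (v * abar) 0)) := by
      rw [Finset.sum_sub_distrib, Finset.sum_const, nsmul_eq_mul, hcardP]
      field_simp
    rw [hrw, abs_mul, abs_of_pos (by positivity : (0:ℝ) < 1 / (n.choose m : ℝ))]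
    apply mul_le_mul_of_nonneg_left _ (by positivity)
    calc |∑ S ∈ P, (max (v * ((m : ℝ)⁻¹ * ∑ j ∈ S, a j)) 0 - max (v * abar) 0)|
        ≤ ∑ S ∈ P, |max (v * ((m : ℝ)⁻¹ * ∑ j ∈ S, a j)) 0 - max (v * abar) 0| :=
          Finset.abs_sum_le_sum_abs _ _
      _ ≤ ∑ S ∈ P, |(m : ℝ)⁻¹ * ∑ j ∈ S, a j - abar| := by
          apply Finset.sum_le_sum
          intro S _
          exact habs _ _
  · -- second inequality
    set b : ℕ → ℝ := fun j => a j - abar with hbdef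
    have hbsum : ∑ j ∈ Finset.range n, b j = 0 := by
      simp only [hbdef, Finset.sum_sub_distrib, Finset.sum_const, card_range, nsmul_eq_mul, habar]
      field_simp
      ring
    have hxS : ∀ S ∈ P, (m : ℝ)⁻¹ * ∑ j ∈ S, a j - abar = (m:ℝ)⁻¹ * ∑ j ∈ S, b j := by
      intro S hS
      have hcardS : (S.card : ℝ) = (m : ℝ) := by
        exact_mod_cast congrArg Nat.cast (mem_powersetCard.1 hS).2
      simp only [hbdef, Finset.sum_sub_distrib, Finset.sum_const, nsmul_eq_mul, hcardS]
      field_simp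
    set D : ℝ := (1 / (n.choose m : ℝ)) * (∑ S ∈ P, |(m : ℝ)⁻¹ * ∑ j ∈ S, a j - abar|) with hDdef
    have hD0 : 0 ≤ D := by
      apply mul_nonneg (by positivity)
      exact Finset.sum_nonneg fun S _ => abs_nonneg _
    set V : ℝ := ((n : ℝ) - (m : ℝ)) / ((n : ℝ) * (m : ℝ)) * (1 / ((n : ℝ) - 1)) *
      ∑ j ∈ Finset.range n, (b j) ^ 2 with hVdef
    have hVeq : (1 / (n.choose m : ℝ)) * ∑ S ∈ P, ((m : ℝ)⁻¹ * ∑ j ∈ S, a j - abar)^2 = V := by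
      have : ∑ S ∈ P, ((m : ℝ)⁻¹ * ∑ j ∈ S, a j - abar)^2
          = (m:ℝ)⁻¹^2 * ∑ S ∈ P, (∑ j ∈ S, b j)^2 := by
        rw [Finset.mul_sum]
        apply Finset.sum_congr rfl
        intro S hS
        rw [hxS S hS, mul_pow]
      rw [this, sum_sq_core n m hn hm hmn b hbsum, hVdef]
      have hid : (((n-2).choose (m-1) : ℝ)) * ((n:ℝ) * ((n:ℝ)-1))
          = ((n.choose m : ℝ)) * ((m:ℝ) * ((n:ℝ)-(m:ℝ))) := by
        have := choose_identity n m hn hm hmn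
        have hcast := congrArg (Nat.cast : ℕ → ℝ) this
        push_cast [Nat.cast_sub hmn, Nat.cast_sub hn, Nat.cast_sub (by omega : 1 ≤ n)] at hcast
        convert hcast using 2
      have hn1 : (n:ℝ) - 1 ≠ 0 := by
        have : (2:ℝ) ≤ n := by exact_mod_cast hn
        linarith
      field_simp
      linear_combination (∑ j ∈ Finset.range n, b j ^ 2) * hid
    have hV0 : 0 ≤ V := by
      rw [← hVeq]
      apply mul_nonneg (by positivity)
      exact Finset.sum_nonneg fun S _ => sq_nonneg _
    have hkey : D^2 ≤ V := by
      rw [← hVeq, hDdef]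
      have hcs : (∑ S ∈ P, |(m : ℝ)⁻¹ * ∑ j ∈ S, a j - abar|)^2
          ≤ (P.card : ℝ) * ∑ S ∈ P, ((m : ℝ)⁻¹ * ∑ j ∈ S, a j - abar)^2 := by
        have := sq_sum_le_card_mul_sum_sq (s := P)
          (f := fun S => |(m : ℝ)⁻¹ * ∑ j ∈ S, a j - abar|)
        simpa [sq_abs] using this
      rw [hcardP] at hcs
      rw [mul_pow]
      calc (1 / (n.choose m : ℝ))^2 * (∑ S ∈ P, |(m : ℝ)⁻¹ * ∑ j ∈ S, a j - abar|)^2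
          ≤ (1 / (n.choose m : ℝ))^2 * ((n.choose m : ℝ) * ∑ S ∈ P, ((m : ℝ)⁻¹ * ∑ j ∈ S, a j - abar)^2) :=
            mul_le_mul_of_nonneg_left hcs (by positivity)
        _ = (1 / (n.choose m : ℝ)) * ∑ S ∈ P, ((m : ℝ)⁻¹ * ∑ j ∈ S, a j - abar)^2 := by
            field_simp
    calc D = Real.sqrt (D^2) := (Real.sqrt_sq hD0).symm
      _ ≤ Real.sqrt V := Real.sqrt_le_sqrt hkey
end

section
/- Let (X_j)_{j ≥ 1} be independent and identically distributed integrable real-valued random variables. Then for all natural numbers m ≤ m′, E| (m′)^{-1} Σ_{j=1}^{m′} X_j | ≤ E| m^{-1} Σ_{j=1}^{m} X_j |. In particular, the asymptotic speed damping factor λ_i(x,−1_d)+λ_i(x,1_d) = E| m^{-1}Σ_{j=1}^m S_i(x;Y_j) | of the sub-sampled Zig-Zag is nonincreasing in the batch size m, so larger subsamples give a larger (faster) asymptotic drift. -/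
open MeasureTheory ProbabilityTheory

/-- If `f ≂ f'`, `g ≂ g'`, with `f ⟂ g` and `f' ⟂ g'`, then `f + g ≂ f' + g'`. -/
lemma identDistrib_add_of_indepFun {Ω : Type*} [MeasurableSpace Ω] {μ : Measure Ω}
    [IsProbabilityMeasure μ] {f g f' g' : Ω → ℝ}
    (hf : Measurable f) (hg : Measurable g) (hf' : Measurable f') (hg' : Measurable g')
    (h1 : IdentDistrib f f' μ μ) (h2 : IdentDistrib g g' μ μ)
    (hi : IndepFun f g μ) (hi' : IndepFun f' g' μ) :
    IdentDistrib (fun ω => f ω + g ω) (fun ω => f' ω + g' ω) μ μ := by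
  have hp : IdentDistrib (fun ω => (f ω, g ω)) (fun ω => (f' ω, g' ω)) μ μ :=
    ⟨(hf.prodMk hg).aemeasurable, (hf'.prodMk hg').aemeasurable, by
      rw [(indepFun_iff_map_prod_eq_prod_map_map hf.aemeasurable hg.aemeasurable).1 hi,
        (indepFun_iff_map_prod_eq_prod_map_map hf'.aemeasurable hg'.aemeasurable).1 hi',
        h1.map_eq, h2.map_eq]⟩
  exact hp.comp measurable_add

/-- Sums over equal-cardinality index sets of an i.i.d. family are identically
distributed. -/
lemma identDistrib_sum_of_card_eq {Ω : Type*} [MeasurableSpace Ω] {μ : Measure Ω}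
    [IsProbabilityMeasure μ] {X : ℕ → Ω → ℝ} (hmeas : ∀ j, Measurable (X j))
    (hindep : iIndepFun X μ)
    (hident : ∀ j, IdentDistrib (X j) (X 1) μ μ) :
    ∀ (n : ℕ) (A B : Finset ℕ), A.card = n → B.card = n →
      IdentDistrib (fun ω => ∑ j ∈ A, X j ω) (fun ω => ∑ j ∈ B, X j ω) μ μ := by
  intro n
  induction n with
  | zero =>
    intro A B hA hB
    rw [Finset.card_eq_zero] at hA hB
    subst hA; subst hB
    simp only [Finset.sum_empty]
    exact IdentDistrib.refl measurable_const.aemeasurable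
  | succ n ih =>
    intro A B hA hB
    obtain ⟨a, ha⟩ : A.Nonempty := Finset.card_pos.1 (by omega)
    obtain ⟨b, hb⟩ : B.Nonempty := Finset.card_pos.1 (by omega)
    have hA' : (A.erase a).card = n := by rw [Finset.card_erase_of_mem ha, hA]; omega
    have hB' : (B.erase b).card = n := by rw [Finset.card_erase_of_mem hb, hB]; omega
    have hmsA : Measurable fun ω => ∑ j ∈ A.erase a, X j ω :=
      Finset.measurable_sum _ fun j _ => hmeas j
    have hmsB : Measurable fun ω => ∑ j ∈ B.erase b, X j ω :=
      Finset.measurable_sum _ fun j _ => hmeas j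
    have hiA : IndepFun (fun ω => ∑ j ∈ A.erase a, X j ω) (X a) μ := by
      have h := hindep.indepFun_finsetSum_of_notMem hmeas (Finset.notMem_erase a A)
      rw [show (fun ω => ∑ j ∈ A.erase a, X j ω) = ∑ j ∈ A.erase a, X j by
        funext ω; simp]
      exact h
    have hiB : IndepFun (fun ω => ∑ j ∈ B.erase b, X j ω) (X b) μ := by
      have h := hindep.indepFun_finsetSum_of_notMem hmeas (Finset.notMem_erase b B)
      rw [show (fun ω => ∑ j ∈ B.erase b, X j ω) = ∑ j ∈ B.erase b, X j by
        funext ω; simp]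
      exact h
    have hab : IdentDistrib (X a) (X b) μ μ := (hident a).trans (hident b).symm
    have key := identDistrib_add_of_indepFun hmsA (hmeas a) hmsB (hmeas b)
      (ih _ _ hA' hB') hab hiA hiB
    simpa only [Finset.sum_erase_add _ _ ha, Finset.sum_erase_add _ _ hb] using key

/-- One-step version: going from batch size `m` to `m+1` does not increase the
expected absolute batch mean. -/
lemma batch_mean_abs_step {Ω : Type*} [MeasurableSpace Ω] (μ : Measure Ω)
    [IsProbabilityMeasure μ] (X : ℕ → Ω → ℝ)
    (hmeas : ∀ j, Measurable (X j))
    (hindep : iIndepFun X μ)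
    (hident : ∀ j, IdentDistrib (X j) (X 1) μ μ)
    (hint : Integrable (X 1) μ)
    (m : ℕ) (hm : 1 ≤ m) :
    (∫ ω, |((m : ℝ) + 1)⁻¹ * ∑ j ∈ Finset.Icc 1 (m + 1), X j ω| ∂μ)
      ≤ ∫ ω, |(m : ℝ)⁻¹ * ∑ j ∈ Finset.Icc 1 m, X j ω| ∂μ := by
  have hm0 : (m : ℝ) ≠ 0 := by positivity
  have hm1 : (m : ℝ) + 1 ≠ 0 := by positivity
  set S : Ω → ℝ := fun ω => ∑ j ∈ Finset.Icc 1 (m + 1), X j ω with hS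
  have hXint : ∀ j, Integrable (X j) μ := fun j => (hident j).symm.integrable_snd hint
  have hSint : Integrable S μ := integrable_finset_sum _ fun j _ => hXint j
  have hGint : ∀ k, Integrable (fun ω => |(m : ℝ)⁻¹ * (S ω - X k ω)|) μ :=
    fun k => ((hSint.sub (hXint k)).const_mul _).abs
  -- each leave-one-out term has the same expectation as the batch-`m` mean
  have key : ∀ k ∈ Finset.Icc 1 (m + 1),
      (∫ ω, |(m : ℝ)⁻¹ * (S ω - X k ω)| ∂μ)
        = ∫ ω, |(m : ℝ)⁻¹ * ∑ j ∈ Finset.Icc 1 m, X j ω| ∂μ := by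
    intro k hk
    have hsub : ∀ ω, S ω - X k ω = ∑ j ∈ (Finset.Icc 1 (m + 1)).erase k, X j ω := by
      intro ω
      have := Finset.sum_erase_add (Finset.Icc 1 (m + 1)) (fun j => X j ω) hk
      linarith [this]
    have hcardA : ((Finset.Icc 1 (m + 1)).erase k).card = m := by
      rw [Finset.card_erase_of_mem hk, Nat.card_Icc]; omega
    have hcardB : (Finset.Icc 1 m).card = m := by rw [Nat.card_Icc]; omega
    have hid := identDistrib_sum_of_card_eq hmeas hindep hident m _ _ hcardA hcardB
    have habs := (hid.comp (u := fun y : ℝ => |(m : ℝ)⁻¹ * y|)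
      ((measurable_const.mul measurable_id).abs)).integral_eq
    calc (∫ ω, |(m : ℝ)⁻¹ * (S ω - X k ω)| ∂μ)
        = ∫ ω, |(m : ℝ)⁻¹ * ∑ j ∈ (Finset.Icc 1 (m + 1)).erase k, X j ω| ∂μ := by
          simp only [hsub]
      _ = ∫ ω, |(m : ℝ)⁻¹ * ∑ j ∈ Finset.Icc 1 m, X j ω| ∂μ := habs
  -- pointwise leave-one-out bound
  have hpt : ∀ ω, |((m : ℝ) + 1)⁻¹ * S ω|
      ≤ ((m : ℝ) + 1)⁻¹ * ∑ k ∈ Finset.Icc 1 (m + 1), |(m : ℝ)⁻¹ * (S ω - X k ω)| := by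
    intro ω
    have hrep : S ω = ∑ k ∈ Finset.Icc 1 (m + 1), (m : ℝ)⁻¹ * (S ω - X k ω) := by
      have hsum : ∑ k ∈ Finset.Icc 1 (m + 1), (S ω - X k ω) = (m : ℝ) * S ω := by
        rw [Finset.sum_sub_distrib, Finset.sum_const, Nat.card_Icc]
        have : (m + 1 + 1 - 1) = m + 1 := by omega
        rw [this, nsmul_eq_mul]
        push_cast
        simp only [hS]
        ring
      rw [← Finset.mul_sum, hsum]
      field_simp
    calc |((m : ℝ) + 1)⁻¹ * S ω|
        = ((m : ℝ) + 1)⁻¹ * |∑ k ∈ Finset.Icc 1 (m + 1), (m : ℝ)⁻¹ * (S ω - X k ω)| := by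
          rw [abs_mul, abs_of_nonneg (by positivity : (0:ℝ) ≤ ((m : ℝ) + 1)⁻¹), ← hrep]
      _ ≤ ((m : ℝ) + 1)⁻¹ * ∑ k ∈ Finset.Icc 1 (m + 1), |(m : ℝ)⁻¹ * (S ω - X k ω)| := by
          gcongr
          exact Finset.abs_sum_le_sum_abs _ _
  -- integrate and use identical distribution of the leave-one-out sums
  have hLint : Integrable (fun ω => |((m : ℝ) + 1)⁻¹ * S ω|) μ := (hSint.const_mul _).abs
  have hRint : Integrable (fun ω => ((m : ℝ) + 1)⁻¹ *
      ∑ k ∈ Finset.Icc 1 (m + 1), |(m : ℝ)⁻¹ * (S ω - X k ω)|) μ :=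
    (integrable_finset_sum _ fun k _ => hGint k).const_mul _
  calc (∫ ω, |((m : ℝ) + 1)⁻¹ * S ω| ∂μ)
      ≤ ∫ ω, ((m : ℝ) + 1)⁻¹ *
          ∑ k ∈ Finset.Icc 1 (m + 1), |(m : ℝ)⁻¹ * (S ω - X k ω)| ∂μ :=
        integral_mono hLint hRint hpt
    _ = ((m : ℝ) + 1)⁻¹ *
          ∑ k ∈ Finset.Icc 1 (m + 1), ∫ ω, |(m : ℝ)⁻¹ * (S ω - X k ω)| ∂μ := by
        rw [integral_const_mul, integral_finset_sum _ fun k _ => hGint k]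
    _ = ((m : ℝ) + 1)⁻¹ * ((m + 1 : ℕ) *
          ∫ ω, |(m : ℝ)⁻¹ * ∑ j ∈ Finset.Icc 1 m, X j ω| ∂μ) := by
        rw [Finset.sum_congr rfl key, Finset.sum_const, Nat.card_Icc, nsmul_eq_mul]
        norm_num
    _ = ∫ ω, |(m : ℝ)⁻¹ * ∑ j ∈ Finset.Icc 1 m, X j ω| ∂μ := by
        push_cast
        field_simp

/-- For an i.i.d. integrable sequence `(X_j)` and batch sizes `1 ≤ m ≤ m′`:
`E| (m′)⁻¹ Σ_{j=1}^{m′} X_j | ≤ E| m⁻¹ Σ_{j=1}^{m} X_j |`; i.e. the asymptotic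
damping factor of sub-sampled Zig-Zag is nonincreasing in the batch size. -/
theorem batch_mean_abs_antitone
    {Ω : Type*} [MeasurableSpace Ω] (μ : Measure Ω) [IsProbabilityMeasure μ]
    (X : ℕ → Ω → ℝ)
    (hmeas : ∀ j, Measurable (X j))
    (hindep : iIndepFun X μ)
    (hident : ∀ j, IdentDistrib (X j) (X 1) μ μ)
    (hint : Integrable (X 1) μ)
    (m m' : ℕ) (hm : 1 ≤ m) (hmm' : m ≤ m') :
    (∫ ω, |(m' : ℝ)⁻¹ * ∑ j ∈ Finset.Icc 1 m', X j ω| ∂μ)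
      ≤ ∫ ω, |(m : ℝ)⁻¹ * ∑ j ∈ Finset.Icc 1 m, X j ω| ∂μ := by
  induction m', hmm' using Nat.le_induction with
  | base => exact le_refl _
  | succ n hn ih =>
    refine le_trans ?_ ih
    have := batch_mean_abs_step μ X hmeas hindep hident hint n (hm.trans hn)
    have hcast : ((n + 1 : ℕ) : ℝ) = (n : ℝ) + 1 := by push_cast; ring
    rw [hcast]
    exact this
end

section
/- (Rescaled ZZ-CV rate: quantitative linearization.) Let n ≥ 1, 1 ≤ m ≤ n, M′ > 0, and let s¹, …, sⁿ : ℝ^d → ℝ be twice continuously differentiable with ‖∇²s^j(z)‖ ≤ M′ (operator norm) for all z ∈ ℝ^d and all j, and suppose Σ_{j=1}^n s^j(x̂) = 0 for a point x̂ ∈ ℝ^d. For ξ, ξ* ∈ ℝ^d define E^j(ξ) = s^j(x̂ + n^{−1/2}ξ) − s^j(x̂ + n^{−1/2}ξ*) + n^{−1} Σ_{k=1}^n s^k(x̂ + n^{−1/2}ξ*) and F^j(ξ) = ξ·∇s^j(x̂) − ξ*·( ∇s^j(x̂) − n^{−1} Σ_{k=1}^n ∇s^k(x̂) ). Then for every j,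 | n^{1/2} E^j(ξ) − F^j(ξ) | ≤ n^{−1/2} M′ ( ‖ξ‖²/2 + ‖ξ*‖² ), and consequently for every v ∈ {−1,+1}, | n^{−1/2} (n / C(n,m)) Σ_{|S|=m} ( v · m^{−1} Σ_{j∈S} E^j(ξ) )_+ − (1 / C(n,m)) Σ_{|S|=m} ( v · m^{−1} Σ_{j∈S} F^j(ξ) )_+ | ≤ n^{−1/2} M′ ( ‖ξ‖²/2 + ‖ξ*‖² ). -/
open Finset
open Set


lemma zz_norm_fderiv_fderiv {d : ℕ} (f : EuclideanSpace ℝ (Fin d) → ℝ) (z : EuclideanSpace ℝ (Fin d)) :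
    ‖fderiv ℝ (fderiv ℝ f) z‖ = ‖iteratedFDeriv ℝ 2 f z‖ := by
  calc ‖fderiv ℝ (fderiv ℝ f) z‖
      = ‖iteratedFDeriv ℝ 0 (fderiv ℝ (fderiv ℝ f)) z‖ := by
        rw [norm_iteratedFDeriv_zero]
    _ = ‖iteratedFDeriv ℝ 1 (fderiv ℝ f) z‖ := norm_iteratedFDeriv_fderiv
    _ = ‖iteratedFDeriv ℝ 2 f z‖ := norm_iteratedFDeriv_fderiv

lemma zz_fderiv_lip {d : ℕ} {M' : ℝ} (f : EuclideanSpace ℝ (Fin d) → ℝ)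
    (hf : ContDiff ℝ 2 f) (hb : ∀ z, ‖iteratedFDeriv ℝ 2 f z‖ ≤ M')
    (z w : EuclideanSpace ℝ (Fin d)) :
    ‖fderiv ℝ f z - fderiv ℝ f w‖ ≤ M' * ‖z - w‖ := by
  have hdiff : ContDiff ℝ 1 (fderiv ℝ f) := hf.fderiv_right (by norm_num)
  exact Convex.norm_image_sub_le_of_norm_fderiv_le
    (fun x _ => (hdiff.differentiable (by norm_num)).differentiableAt)
    (fun x _ => by rw [zz_norm_fderiv_fderiv]; exact hb x)
    convex_univ (mem_univ w) (mem_univ z)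

lemma zz_taylor2 {d : ℕ} {M' : ℝ} (f : EuclideanSpace ℝ (Fin d) → ℝ)
    (hf : ContDiff ℝ 2 f) (hb : ∀ z, ‖iteratedFDeriv ℝ 2 f z‖ ≤ M')
    (x h : EuclideanSpace ℝ (Fin d)) :
    |f (x + h) - f x - fderiv ℝ f x h| ≤ M' / 2 * ‖h‖ ^ 2 := by
  set φ : ℝ → ℝ := fun t => f (x + t • h) - f x - t * fderiv ℝ f x h with hφdef
  have hφ : ∀ t : ℝ, HasDerivAt φ (fderiv ℝ f (x + t • h) h - fderiv ℝ f x h) t := by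
    intro t
    have h1 : HasDerivAt (fun t : ℝ => x + t • h) h t := by
      simpa using ((hasDerivAt_id t).smul_const h).const_add x
    have h2 : HasFDerivAt f (fderiv ℝ f (x + t • h)) (x + t • h) :=
      ((hf.differentiable (by norm_num)) (x + t • h)).hasFDerivAt
    have h3 : HasDerivAt (fun t : ℝ => f (x + t • h)) (fderiv ℝ f (x + t • h) h) t :=
      h2.comp_hasDerivAt t h1
    exact (h3.sub_const (f x)).sub (hasDerivAt_mul_const (fderiv ℝ f x h))
  have key : ∀ u ∈ Icc (0:ℝ) 1, ‖φ u‖ ≤ M' * ‖h‖ ^ 2 * (u ^ 2 / 2) := by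
    refine image_norm_le_of_norm_deriv_right_le_deriv_boundary
      (f := φ) (a := 0) (b := 1)
      (f' := fun t => fderiv ℝ f (x + t • h) h - fderiv ℝ f x h)
      (B := fun t => M' * ‖h‖ ^ 2 * (t ^ 2 / 2))
      (B' := fun t => M' * ‖h‖ ^ 2 * t) ?_ ?_ ?_ ?_ ?_
    · exact fun t _ => ((hφ t).continuousAt).continuousWithinAt
    · exact fun t _ => (hφ t).hasDerivWithinAt
    · simp [hφdef]
    · intro t
      have : HasDerivAt (fun t : ℝ => M' * ‖h‖ ^ 2 * (t ^ 2 / 2)) (M' * ‖h‖ ^ 2 * t) t := by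
        have := ((hasDerivAt_pow 2 t).div_const 2).const_mul (M' * ‖h‖ ^ 2)
        convert this using 1
        · rfl
        · rfl
        · rw [show (2:ℕ) - 1 = 1 from rfl, pow_one]; push_cast; ring
      exact this
    · intro t ht
      have e1 : fderiv ℝ f (x + t • h) h - fderiv ℝ f x h
          = (fderiv ℝ f (x + t • h) - fderiv ℝ f x) h := by
        simp
      show |fderiv ℝ f (x + t • h) h - fderiv ℝ f x h| ≤ M' * ‖h‖ ^ 2 * t
      rw [e1, ← Real.norm_eq_abs]
      calc ‖(fderiv ℝ f (x + t • h) - fderiv ℝ f x) h‖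
          ≤ ‖fderiv ℝ f (x + t • h) - fderiv ℝ f x‖ * ‖h‖ :=
            ContinuousLinearMap.le_opNorm _ h
        _ ≤ M' * ‖x + t • h - x‖ * ‖h‖ := by
            gcongr; exact zz_fderiv_lip f hf hb _ _
        _ = M' * ‖h‖ ^ 2 * t := by
            rw [show x + t • h - x = t • h by abel, norm_smul, Real.norm_eq_abs,
              abs_of_nonneg ht.1]
            ring
  have h1 := key 1 (by norm_num)
  rw [show M' / 2 * ‖h‖ ^ 2 = M' * ‖h‖ ^ 2 * (1 ^ 2 / 2) by ring]
  simpa [hφdef, Real.norm_eq_abs] using h1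

/-- Quantitative linearization of the rescaled ZZ-CV switching rate: under a uniform
Hessian bound `‖∇²s^j‖ ≤ M′` and `Σ_j s^j(x̂) = 0`, the control-variate terms `E^j` in
the rescaled coordinate satisfy `|√n·E^j(ξ) − F^j(ξ)| ≤ n^{−1/2} M′(‖ξ‖²/2 + ‖ξ*‖²)`
with `F^j` the first-order Taylor linearization, and consequently the rescaled ZZ-CV
rate is within the same bound of the linearized rate. -/
theorem zzcv_rescaled_rate_linearization
    (d n m : ℕ) (hn : 1 ≤ n) (hm1 : 1 ≤ m) (hmn : m ≤ n)
    (M' : ℝ) (hM' : 0 < M')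
    (s : ℕ → EuclideanSpace ℝ (Fin d) → ℝ)
    (hs : ∀ j ∈ Finset.range n, ContDiff ℝ 2 (s j))
    (hhess : ∀ j ∈ Finset.range n, ∀ z, ‖iteratedFDeriv ℝ 2 (s j) z‖ ≤ M')
    (xh : EuclideanSpace ℝ (Fin d)) (hroot : ∑ j ∈ Finset.range n, s j xh = 0)
    (ξ ξstar : EuclideanSpace ℝ (Fin d))
    (E F : ℕ → EuclideanSpace ℝ (Fin d) → ℝ)
    (hE : ∀ j ζ, E j ζ
      = s j (xh + (Real.sqrt n)⁻¹ • ζ) - s j (xh + (Real.sqrt n)⁻¹ • ξstar)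
        + (n : ℝ)⁻¹ * ∑ k ∈ Finset.range n, s k (xh + (Real.sqrt n)⁻¹ • ξstar))
    (hF : ∀ j ζ, F j ζ
      = fderiv ℝ (s j) xh ζ
        - (fderiv ℝ (s j) xh ξstar
            - (n : ℝ)⁻¹ * ∑ k ∈ Finset.range n, fderiv ℝ (s k) xh ξstar)) :
    (∀ j ∈ Finset.range n,
      |Real.sqrt n * E j ξ - F j ξ|
        ≤ (Real.sqrt n)⁻¹ * M' * (‖ξ‖ ^ 2 / 2 + ‖ξstar‖ ^ 2)) ∧
    (∀ v : ℝ, v = 1 ∨ v = -1 →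
      |(Real.sqrt n)⁻¹ *
            ((n : ℝ) / (n.choose m : ℝ) *
              ∑ S ∈ Finset.powersetCard m (Finset.range n),
                max (v * ((m : ℝ)⁻¹ * ∑ j ∈ S, E j ξ)) 0)
          - (1 / (n.choose m : ℝ)) *
              ∑ S ∈ Finset.powersetCard m (Finset.range n),
                max (v * ((m : ℝ)⁻¹ * ∑ j ∈ S, F j ξ)) 0|
        ≤ (Real.sqrt n)⁻¹ * M' * (‖ξ‖ ^ 2 / 2 + ‖ξstar‖ ^ 2)) := by
  have hn0 : (0:ℝ) < n := by exact_mod_cast hn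
  set sq : ℝ := Real.sqrt n with hsqdef
  have hsq : 0 < sq := Real.sqrt_pos.2 hn0
  have hss : sq * sq = n := Real.mul_self_sqrt hn0.le
  have hnn : ((n:ℝ)) = sq * sq := hss.symm
  -- remainder bound
  have hRb : ∀ j ∈ Finset.range n, ∀ ζ : EuclideanSpace ℝ (Fin d),
      |s j (xh + sq⁻¹ • ζ) - s j xh - sq⁻¹ * fderiv ℝ (s j) xh ζ|
        ≤ M' / 2 * ((n:ℝ)⁻¹ * ‖ζ‖ ^ 2) := by
    intro j hj ζ
    have h1 := zz_taylor2 (s j) (hs j hj) (hhess j hj) xh (sq⁻¹ • ζ)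
    have h2 : fderiv ℝ (s j) xh (sq⁻¹ • ζ) = sq⁻¹ * fderiv ℝ (s j) xh ζ := by
      rw [map_smul]; rfl
    have h3 : ‖sq⁻¹ • ζ‖ ^ 2 = (n:ℝ)⁻¹ * ‖ζ‖ ^ 2 := by
      rw [norm_smul, mul_pow, Real.norm_eq_abs, abs_of_pos (inv_pos.2 hsq),
        inv_pow, pow_two, hss]
    rw [h2, h3] at h1
    exact h1
  -- key identity
  have hid : ∀ j : ℕ, sq * E j ξ - F j ξ =
      sq * (s j (xh + sq⁻¹ • ξ) - s j xh - sq⁻¹ * fderiv ℝ (s j) xh ξ)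
      - sq * (s j (xh + sq⁻¹ • ξstar) - s j xh - sq⁻¹ * fderiv ℝ (s j) xh ξstar)
      + sq * (n:ℝ)⁻¹ * ∑ k ∈ Finset.range n,
          (s k (xh + sq⁻¹ • ξstar) - s k xh - sq⁻¹ * fderiv ℝ (s k) xh ξstar) := by
    intro j
    rw [hE, hF]
    have hsplit : ∑ k ∈ Finset.range n,
        (s k (xh + sq⁻¹ • ξstar) - s k xh - sq⁻¹ * fderiv ℝ (s k) xh ξstar)
        = (∑ k ∈ Finset.range n, s k (xh + sq⁻¹ • ξstar))
          - sq⁻¹ * ∑ k ∈ Finset.range n, fderiv ℝ (s k) xh ξstar := by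
      rw [Finset.sum_sub_distrib, Finset.sum_sub_distrib, hroot, Finset.mul_sum]
      ring
    rw [hsplit]
    have h1 : sq * sq⁻¹ = 1 := mul_inv_cancel₀ hsq.ne'
    linear_combination (fderiv ℝ (s j) xh ξ - fderiv ℝ (s j) xh ξstar
      + (n:ℝ)⁻¹ * ∑ k ∈ Finset.range n, fderiv ℝ (s k) xh ξstar) * h1
  -- part 1
  have key1 : ∀ j ∈ Finset.range n,
      |sq * E j ξ - F j ξ| ≤ sq⁻¹ * M' * (‖ξ‖ ^ 2 / 2 + ‖ξstar‖ ^ 2) := by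
    intro j hj
    rw [hid j]
    set Rξ := s j (xh + sq⁻¹ • ξ) - s j xh - sq⁻¹ * fderiv ℝ (s j) xh ξ with hRξ
    set Rσ := s j (xh + sq⁻¹ • ξstar) - s j xh - sq⁻¹ * fderiv ℝ (s j) xh ξstar with hRσ
    set Ssum := ∑ k ∈ Finset.range n,
        (s k (xh + sq⁻¹ • ξstar) - s k xh - sq⁻¹ * fderiv ℝ (s k) xh ξstar) with hSsum
    have b1 : |Rξ| ≤ M' / 2 * ((n:ℝ)⁻¹ * ‖ξ‖ ^ 2) := hRb j hj ξ
    have b2 : |Rσ| ≤ M' / 2 * ((n:ℝ)⁻¹ * ‖ξstar‖ ^ 2) := hRb j hj ξstar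
    have b3 : |Ssum| ≤ (n:ℝ) * (M' / 2 * ((n:ℝ)⁻¹ * ‖ξstar‖ ^ 2)) := by
      calc |Ssum| ≤ ∑ k ∈ Finset.range n,
            |s k (xh + sq⁻¹ • ξstar) - s k xh - sq⁻¹ * fderiv ℝ (s k) xh ξstar| :=
          Finset.abs_sum_le_sum_abs _ _
        _ ≤ ∑ _k ∈ Finset.range n, M' / 2 * ((n:ℝ)⁻¹ * ‖ξstar‖ ^ 2) :=
          Finset.sum_le_sum fun k hk => hRb k hk ξstar
        _ = (n:ℝ) * (M' / 2 * ((n:ℝ)⁻¹ * ‖ξstar‖ ^ 2)) := by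
          rw [Finset.sum_const, Finset.card_range, nsmul_eq_mul]
    have htri : |sq * Rξ - sq * Rσ + sq * (n:ℝ)⁻¹ * Ssum|
        ≤ sq * |Rξ| + sq * |Rσ| + sq * (n:ℝ)⁻¹ * |Ssum| := by
      calc |sq * Rξ - sq * Rσ + sq * (n:ℝ)⁻¹ * Ssum|
          ≤ |sq * Rξ - sq * Rσ| + |sq * (n:ℝ)⁻¹ * Ssum| := abs_add_le _ _
        _ ≤ (|sq * Rξ| + |sq * Rσ|) + |sq * (n:ℝ)⁻¹ * Ssum| := by
            gcongr; exact abs_sub _ _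
        _ = sq * |Rξ| + sq * |Rσ| + sq * (n:ℝ)⁻¹ * |Ssum| := by
            rw [abs_mul, abs_mul, abs_mul, abs_mul, abs_of_pos hsq,
              abs_of_pos (inv_pos.2 hn0)]
    have hfin : sq * (M' / 2 * ((n:ℝ)⁻¹ * ‖ξ‖ ^ 2))
        + sq * (M' / 2 * ((n:ℝ)⁻¹ * ‖ξstar‖ ^ 2))
        + sq * (n:ℝ)⁻¹ * ((n:ℝ) * (M' / 2 * ((n:ℝ)⁻¹ * ‖ξstar‖ ^ 2)))
        = sq⁻¹ * M' * (‖ξ‖ ^ 2 / 2 + ‖ξstar‖ ^ 2) := by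
      rw [hnn]
      field_simp
      ring
    calc |sq * Rξ - sq * Rσ + sq * (n:ℝ)⁻¹ * Ssum|
        ≤ sq * |Rξ| + sq * |Rσ| + sq * (n:ℝ)⁻¹ * |Ssum| := htri
      _ ≤ sq * (M' / 2 * ((n:ℝ)⁻¹ * ‖ξ‖ ^ 2))
          + sq * (M' / 2 * ((n:ℝ)⁻¹ * ‖ξstar‖ ^ 2))
          + sq * (n:ℝ)⁻¹ * ((n:ℝ) * (M' / 2 * ((n:ℝ)⁻¹ * ‖ξstar‖ ^ 2))) := by
          gcongr
      _ = sq⁻¹ * M' * (‖ξ‖ ^ 2 / 2 + ‖ξstar‖ ^ 2) := hfin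
  refine ⟨key1, ?_⟩
  -- part 2
  intro v hv
  set δ : ℝ := sq⁻¹ * M' * (‖ξ‖ ^ 2 / 2 + ‖ξstar‖ ^ 2) with hδdef
  have hδ0 : 0 ≤ δ := by positivity
  have hC : (0:ℝ) < (n.choose m : ℝ) := by
    exact_mod_cast Nat.choose_pos hmn
  set C : ℝ := (n.choose m : ℝ)
  have hm0 : (0:ℝ) < m := by exact_mod_cast hm1
  have hsqn : sq⁻¹ * (n:ℝ) = sq := by
    rw [hnn, ← mul_assoc, inv_mul_cancel₀ hsq.ne', one_mul]
  have e1 : sq⁻¹ * ((n:ℝ) / C *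
        ∑ S ∈ Finset.powersetCard m (Finset.range n),
          max (v * ((m:ℝ)⁻¹ * ∑ j ∈ S, E j ξ)) 0)
      = (1 / C) * ∑ S ∈ Finset.powersetCard m (Finset.range n),
          max (v * ((m:ℝ)⁻¹ * ∑ j ∈ S, sq * E j ξ)) 0 := by
    rw [show sq⁻¹ * ((n:ℝ) / C * ∑ S ∈ Finset.powersetCard m (Finset.range n),
          max (v * ((m:ℝ)⁻¹ * ∑ j ∈ S, E j ξ)) 0)
        = (1 / C) * (sq⁻¹ * (n:ℝ) * ∑ S ∈ Finset.powersetCard m (Finset.range n),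
          max (v * ((m:ℝ)⁻¹ * ∑ j ∈ S, E j ξ)) 0) by ring, hsqn, Finset.mul_sum]
    refine congrArg (fun t => 1 / C * t) (Finset.sum_congr rfl fun S _ => ?_)
    rw [mul_max_of_nonneg _ _ hsq.le, mul_zero]
    congr 1
    rw [← Finset.mul_sum]
    ring
  rw [e1, ← mul_sub, ← Finset.sum_sub_distrib, abs_mul, abs_of_pos (by positivity : (0:ℝ) < 1/C)]
  have hperS : ∀ S ∈ Finset.powersetCard m (Finset.range n),
      |max (v * ((m:ℝ)⁻¹ * ∑ j ∈ S, sq * E j ξ)) 0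
        - max (v * ((m:ℝ)⁻¹ * ∑ j ∈ S, F j ξ)) 0| ≤ δ := by
    intro S hS
    obtain ⟨hsub, hcard⟩ := Finset.mem_powersetCard.mp hS
    have habsv : |v| = 1 := by rcases hv with rfl | rfl <;> simp
    calc |max (v * ((m:ℝ)⁻¹ * ∑ j ∈ S, sq * E j ξ)) 0
          - max (v * ((m:ℝ)⁻¹ * ∑ j ∈ S, F j ξ)) 0|
        ≤ |v * ((m:ℝ)⁻¹ * ∑ j ∈ S, sq * E j ξ) - v * ((m:ℝ)⁻¹ * ∑ j ∈ S, F j ξ)| :=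
          abs_max_sub_max_le_abs _ _ _
      _ = (m:ℝ)⁻¹ * |∑ j ∈ S, (sq * E j ξ - F j ξ)| := by
          rw [← mul_sub, ← mul_sub, ← Finset.sum_sub_distrib, abs_mul, habsv, one_mul,
            abs_mul, abs_of_pos (inv_pos.2 hm0)]
      _ ≤ (m:ℝ)⁻¹ * ∑ j ∈ S, |sq * E j ξ - F j ξ| := by
          gcongr
          exact Finset.abs_sum_le_sum_abs _ _
      _ ≤ (m:ℝ)⁻¹ * ∑ _j ∈ S, δ := by
          gcongr with j hj
          exact key1 j (hsub hj)
      _ = δ := by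
          rw [Finset.sum_const, hcard, nsmul_eq_mul, ← mul_assoc,
            inv_mul_cancel₀ hm0.ne', one_mul]
  calc (1 / C) * |∑ S ∈ Finset.powersetCard m (Finset.range n),
        (max (v * ((m:ℝ)⁻¹ * ∑ j ∈ S, sq * E j ξ)) 0
          - max (v * ((m:ℝ)⁻¹ * ∑ j ∈ S, F j ξ)) 0)|
      ≤ (1 / C) * ∑ S ∈ Finset.powersetCard m (Finset.range n),
        |max (v * ((m:ℝ)⁻¹ * ∑ j ∈ S, sq * E j ξ)) 0
          - max (v * ((m:ℝ)⁻¹ * ∑ j ∈ S, F j ξ)) 0| := by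
        gcongr
        exact Finset.abs_sum_le_sum_abs _ _
    _ ≤ (1 / C) * ∑ _S ∈ Finset.powersetCard m (Finset.range n), δ := by
        gcongr with S hS
        exact hperS S hS
    _ = δ := by
        rw [Finset.sum_const, Finset.card_powersetCard, Finset.card_range, nsmul_eq_mul]
        field_simp
        rfl
end
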